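/- Let Δ⁺ be the positive roots of a simple root system with Cartan-type matrix Q := [⟨αᵢ,αⱼ⟩] (positive definite) and F(X) := Σ_{α∈Δ⁺}(x_α − log x_α) with x_α = 1 + Σᵢ k^α_i(xᵢ−1), defined on the open set U where all x_α > 0. Then every maximal solution X(t) of the ODE X' = −Q·∇F(X) with X(0) ∈ U converges to (1,…,1) as t → ∞. -/

import Mathlib

open Matrix

lemma quad_upper (n : ℕ) (P : Matrix (Fin n) (Fin n) ℝ) :
    ∃ Λ > 0, ∀ v : Fin n → ℝ, v ⬝ᵥ P.mulVec v ≤ Λ * ∑ i, v i ^ 2 := by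
  refine ⟨(∑ i, ∑ j, |P i j|) + 1, by positivity, fun v => ?_⟩
  set S := ∑ i, v i ^ 2 with hS
  have hS0 : 0 ≤ S := Finset.sum_nonneg fun i _ => sq_nonneg _
  have hsq : ∀ i, v i ^ 2 ≤ S := fun i =>
    Finset.single_le_sum (fun j _ => sq_nonneg (v j)) (Finset.mem_univ i)
  have key : v ⬝ᵥ P.mulVec v ≤ ∑ i, ∑ j, |P i j| * S := by
    rw [show v ⬝ᵥ P.mulVec v = ∑ i, ∑ j, v i * (P i j * v j) by
      simp [Matrix.mulVec, dotProduct, Finset.mul_sum]]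
    refine Finset.sum_le_sum fun i _ => Finset.sum_le_sum fun j _ => ?_
    have h1 : v i * (P i j * v j) ≤ |P i j| * |v i * v j| := by
      calc v i * (P i j * v j) ≤ |v i * (P i j * v j)| := le_abs_self _
        _ = |P i j| * |v i * v j| := by rw [abs_mul, abs_mul, abs_mul]; ring
    refine h1.trans (mul_le_mul_of_nonneg_left ?_ (abs_nonneg _))
    have : |v i * v j| ≤ (v i ^ 2 + v j ^ 2) / 2 := by
      rw [abs_mul]
      nlinarith [sq_nonneg (|v i| - |v j|), sq_abs (v i), sq_abs (v j)]
    linarith [hsq i, hsq j]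
  calc v ⬝ᵥ P.mulVec v ≤ ∑ i, ∑ j, |P i j| * S := key
    _ = (∑ i, ∑ j, |P i j|) * S := by rw [Finset.sum_mul]; simp [Finset.sum_mul]
    _ ≤ ((∑ i, ∑ j, |P i j|) + 1) * S := by
        refine mul_le_mul_of_nonneg_right (by linarith) hS0

lemma quad_lower (n : ℕ) (P : Matrix (Fin n) (Fin n) ℝ) (hP : P.PosDef) :
    ∃ μ > 0, ∀ v : Fin n → ℝ, μ * ∑ i, v i ^ 2 ≤ v ⬝ᵥ P.mulVec v := by
  rcases Nat.eq_zero_or_pos n with hn | hn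
  · subst hn
    exact ⟨1, one_pos, fun v => by simp [dotProduct]⟩
  set φ : (Fin n → ℝ) → ℝ := fun v => v ⬝ᵥ P.mulVec v with hφdef
  have hφeq : ∀ v, φ v = ∑ i, v i * ∑ j, P i j * v j := fun v => by
    simp [φ, Matrix.mulVec, dotProduct]
  have hφc : Continuous φ := by
    have : Continuous (fun v : Fin n → ℝ => ∑ i, v i * ∑ j, P i j * v j) := by continuity
    simpa [funext hφeq] using this
  set Sp : Set (Fin n → ℝ) := {v | ∑ i, v i ^ 2 = 1} with hSp
  have hsq : Continuous (fun v : Fin n → ℝ => ∑ i, v i ^ 2) := by continuity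
  have hclosed : IsClosed Sp := isClosed_eq hsq continuous_const
  have hbdd : Bornology.IsBounded Sp := by
    refine (Metric.isBounded_iff_subset_closedBall 0).mpr ⟨1, fun v hv => ?_⟩
    simp only [Metric.mem_closedBall, dist_zero_right]
    rw [pi_norm_le_iff_of_nonneg zero_le_one]
    intro i
    have h1 : v i ^ 2 ≤ 1 := hv ▸ Finset.single_le_sum (fun j _ => sq_nonneg (v j)) (Finset.mem_univ i)
    rw [Real.norm_eq_abs, abs_le]
    constructor <;> nlinarith
  have hcpt : IsCompact Sp := Metric.isCompact_of_isClosed_isBounded hclosed hbdd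
  have hne : Sp.Nonempty := by
    refine ⟨fun j => if j = ⟨0, hn⟩ then 1 else 0, ?_⟩
    simp only [hSp, Set.mem_setOf_eq]
    rw [Finset.sum_eq_single ⟨0, hn⟩] <;> simp +contextual
  obtain ⟨v₀, hv₀S, hmin⟩ := hcpt.exists_isMinOn hne hφc.continuousOn
  have hv₀ne : v₀ ≠ 0 := by
    intro h
    rw [hSp, Set.mem_setOf_eq, h] at hv₀S
    simp at hv₀S
  have hμ : 0 < φ v₀ := by simpa using hP.dotProduct_mulVec_pos hv₀ne
  refine ⟨φ v₀, hμ, fun v => ?_⟩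
  rcases eq_or_ne v 0 with rfl | hv
  · simp [φ, dotProduct]
  · set S := ∑ i, v i ^ 2 with hS
    have hS0 : 0 < S := by
      have : ∃ i, v i ≠ 0 := by
        by_contra h
        push_neg at h
        exact hv (funext h)
      obtain ⟨i, hi⟩ := this
      exact Finset.sum_pos' (fun j _ => sq_nonneg _) ⟨i, Finset.mem_univ i, by positivity⟩
    set c := Real.sqrt S with hc
    have hc0 : 0 < c := Real.sqrt_pos.mpr hS0
    have hc2 : c ^ 2 = S := Real.sq_sqrt hS0.le
    set w := c⁻¹ • v with hw
    have hwS : w ∈ Sp := by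
      simp only [hSp, Set.mem_setOf_eq, hw, Pi.smul_apply, smul_eq_mul, mul_pow]
      rw [← Finset.mul_sum, ← hS, inv_pow, hc2]
      field_simp
    have hscale : φ w = c⁻¹ ^ 2 * φ v := by
      simp only [φ, hw, smul_dotProduct, Matrix.mulVec_smul, dotProduct_smul,
        smul_eq_mul]
      ring
    have hmw : φ v₀ ≤ c⁻¹ ^ 2 * φ v := by
      have h := hmin hwS
      have h2 : φ v₀ ≤ φ w := h
      rwa [hscale] at h2
    have : φ v₀ * c ^ 2 ≤ φ v := by
      have h2 : (0:ℝ) < c ^ 2 := by positivity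
      calc φ v₀ * c ^ 2 ≤ (c⁻¹ ^ 2 * φ v) * c ^ 2 := by nlinarith [hmw]
        _ = φ v := by field_simp
    rwa [hc2] at this

-- derivative of quadratic form along a curve
lemma hasDerivAt_quadform (n : ℕ) (P : Matrix (Fin n) (Fin n) ℝ)
    (hsymm : ∀ i j, P i j = P j i) (D : ℝ → Fin n → ℝ) (V : Fin n → ℝ) (t : ℝ)
    (hD : ∀ i, HasDerivAt (fun s => D s i) (V i) t) :
    HasDerivAt (fun s => D s ⬝ᵥ P.mulVec (D s)) (2 * (D t ⬝ᵥ P.mulVec V)) t := by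
  have hfun : ∀ s, D s ⬝ᵥ P.mulVec (D s) = ∑ p : Fin n × Fin n, D s p.1 * P p.1 p.2 * D s p.2 := by
    intro s
    rw [Fintype.sum_prod_type]
    simp [Matrix.mulVec, dotProduct, Finset.mul_sum, mul_assoc]
  have key : HasDerivAt (fun s => ∑ p : Fin n × Fin n, D s p.1 * P p.1 p.2 * D s p.2)
      (∑ p : Fin n × Fin n, (V p.1 * P p.1 p.2 * D t p.2 + D t p.1 * P p.1 p.2 * V p.2)) t := by
    apply HasDerivAt.fun_sum
    intro p _
    have h1 := (hD p.1).mul_const (P p.1 p.2)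
    exact h1.mul (hD p.2)
  have heq : (∑ p : Fin n × Fin n, (V p.1 * P p.1 p.2 * D t p.2 + D t p.1 * P p.1 p.2 * V p.2))
      = 2 * (D t ⬝ᵥ P.mulVec V) := by
    rw [Finset.sum_add_distrib]
    have h2 : ∑ p : Fin n × Fin n, D t p.1 * P p.1 p.2 * V p.2 = D t ⬝ᵥ P.mulVec V := by
      rw [Fintype.sum_prod_type]
      simp [Matrix.mulVec, dotProduct, Finset.mul_sum, mul_assoc]
    have h1 : ∑ p : Fin n × Fin n, V p.1 * P p.1 p.2 * D t p.2 = D t ⬝ᵥ P.mulVec V := by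
      rw [Fintype.sum_prod_type, Finset.sum_comm, ← h2, Fintype.sum_prod_type]
      refine Finset.sum_congr rfl fun j _ => Finset.sum_congr rfl fun i _ => ?_
      rw [hsymm i j]; ring
    rw [h1, h2]; ring
  rw [heq] at key
  simp only [hfun]
  exact key



/-- Every (globally defined, maximal) solution of the pluriclosed-flow
ODE `X' = -Q·∇F(X)` staying in the region `U = {X : x_α(X) > 0 for all α ∈ Δ⁺}`,
where `F(X) = Σ_{α∈Δ⁺}(x_α - log x_α)`, `x_α = 1 + Σᵢ k^α_i(xᵢ - 1)`, and `Q` is the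
positive definite matrix `[⟨αᵢ,αⱼ⟩]`, converges to `(1,…,1)` as `t → ∞`. -/
theorem stmt_17 {ι : Type*} (Δp : Finset ι) (n : ℕ) (k : ι → Fin n → ℕ)
    (e : Fin n → ι) (he : ∀ i, e i ∈ Δp) (heinj : Function.Injective e)
    (hke : ∀ i j, k (e i) j = if j = i then 1 else 0)
    (Q : Matrix (Fin n) (Fin n) ℝ) (hQ : Q.PosDef)
    (X : ℝ → (Fin n → ℝ))
    (hXU : ∀ t ∈ Set.Ici (0 : ℝ), ∀ α ∈ Δp,
      0 < 1 + ∑ i, (k α i : ℝ) * (X t i - 1))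
    (hX : ∀ t ∈ Set.Ici (0 : ℝ), HasDerivAt X
      (-(Q.mulVec (fun j => ∑ α ∈ Δp,
        (k α j : ℝ) * (1 - (1 + ∑ i, (k α i : ℝ) * (X t i - 1))⁻¹)))) t) :
    Filter.Tendsto X Filter.atTop (nhds fun _ => 1) := by
  classical
  set P := Q⁻¹ with hPdef
  have hP : P.PosDef := hQ.inv
  have hPsymm : ∀ i j, P i j = P j i := fun i j => (Matrix.IsHermitian.apply hP.1 i j).symm
  -- notation
  set x : ℝ → ι → ℝ := fun t α => 1 + ∑ i, (k α i : ℝ) * (X t i - 1) with hxdef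
  set g : ℝ → Fin n → ℝ := fun t j => ∑ α ∈ Δp, (k α j : ℝ) * (1 - (x t α)⁻¹) with hgdef
  set D : ℝ → Fin n → ℝ := fun t i => X t i - 1 with hDdef
  set G : ℝ → ℝ := fun t => D t ⬝ᵥ P.mulVec (D t) with hGdef
  -- x along unit coordinates
  have hxe : ∀ t i, x t (e i) = X t i := by
    intro t i
    simp only [hxdef]
    rw [Finset.sum_eq_single i]
    · rw [hke]; simp
    · intro j _ hj; rw [hke]; simp [hj]
    · intro h; exact absurd (Finset.mem_univ i) h
  -- positivity of X coordinates
  have hXpos : ∀ t ∈ Set.Ici (0:ℝ), ∀ i, 0 < X t i := by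
    intro t ht i
    have := hXU t ht (e i) (he i)
    rwa [show (1 + ∑ j, (k (e i) j : ℝ) * (X t j - 1)) = x t (e i) from rfl, hxe] at this
  -- key dot product identity
  have hdot : ∀ t ∈ Set.Ici (0:ℝ), D t ⬝ᵥ g t = ∑ α ∈ Δp, (x t α - 1)^2 / x t α := by
    intro t ht
    have h1 : D t ⬝ᵥ g t = ∑ α ∈ Δp, (1 - (x t α)⁻¹) * (x t α - 1) := by
      simp only [dotProduct, hgdef, Finset.mul_sum]
      rw [Finset.sum_comm]
      refine Finset.sum_congr rfl fun α hα => ?_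
      have : ∑ j, D t j * ((k α j : ℝ) * (1 - (x t α)⁻¹))
          = (1 - (x t α)⁻¹) * ∑ j, (k α j : ℝ) * (X t j - 1) := by
        rw [Finset.mul_sum]
        refine Finset.sum_congr rfl fun j _ => ?_
        simp only [hDdef]; ring
      rw [this]
      have hx1 : ∑ j, (k α j : ℝ) * (X t j - 1) = x t α - 1 := by simp [hxdef]
      rw [hx1]
    rw [h1]
    refine Finset.sum_congr rfl fun α hα => ?_
    have hxa : 0 < x t α := hXU t ht α hα
    field_simp
  -- lower bound terms nonneg
  have hterm : ∀ t ∈ Set.Ici (0:ℝ), ∀ α ∈ Δp, 0 ≤ (x t α - 1)^2 / x t α := by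
    intro t ht α hα
    exact div_nonneg (sq_nonneg _) (hXU t ht α hα).le
  have hdotpos : ∀ t ∈ Set.Ici (0:ℝ), 0 ≤ D t ⬝ᵥ g t := by
    intro t ht
    rw [hdot t ht]
    exact Finset.sum_nonneg (hterm t ht)
  -- sum over unit roots lower bound
  have hdotlow : ∀ t ∈ Set.Ici (0:ℝ), (∑ i, (X t i - 1)^2 / X t i) ≤ D t ⬝ᵥ g t := by
    intro t ht
    rw [hdot t ht]
    have himg : ∑ i, (X t i - 1)^2 / X t i
        = ∑ α ∈ Finset.image e Finset.univ, (x t α - 1)^2 / x t α := by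
      rw [Finset.sum_image (fun a _ b _ h => heinj h)]
      refine Finset.sum_congr rfl fun i _ => by rw [hxe]
    rw [himg]
    refine Finset.sum_le_sum_of_subset_of_nonneg ?_ (fun α hα _ => hterm t ht α hα)
    intro α hα
    obtain ⟨i, _, rfl⟩ := Finset.mem_image.mp hα
    exact he i
  -- derivative of G
  have hG : ∀ t ∈ Set.Ici (0:ℝ), HasDerivAt G (-2 * (D t ⬝ᵥ g t)) t := by
    intro t ht
    have hXt := hX t ht
    have hcoord : ∀ i, HasDerivAt (fun s => D s i)
        ((-(Q.mulVec (g t))) i) t := by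
      intro i
      have := (hasDerivAt_pi.mp hXt) i
      exact this.sub_const 1
    have := hasDerivAt_quadform n P hPsymm D (-(Q.mulVec (g t))) t hcoord
    have hPV : P.mulVec (-(Q.mulVec (g t))) = -(g t) := by
      rw [Matrix.mulVec_neg, Matrix.mulVec_mulVec, hPdef,
        Matrix.nonsing_inv_mul Q (isUnit_iff_ne_zero.mpr (ne_of_gt hQ.det_pos)), Matrix.one_mulVec]
    rw [hPV] at this
    convert this using 1
    rw [dotProduct_neg]
    ring
  -- continuity of G on Ici 0
  have hGc : ContinuousOn G (Set.Ici 0) := fun t ht => ((hG t ht).continuousAt).continuousWithinAt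
  -- Stage 1: G is antitone on Ici 0
  have hanti : AntitoneOn G (Set.Ici 0) := by
    apply antitoneOn_of_deriv_nonpos (convex_Ici 0) hGc
    · intro t ht
      rw [interior_Ici] at ht
      exact (hG t (Set.mem_Ici.mpr (le_of_lt (Set.mem_Ioi.mp ht)))).differentiableAt.differentiableWithinAt
    · intro t ht
      rw [interior_Ici] at ht
      rw [(hG t (Set.mem_Ici.mpr (le_of_lt (Set.mem_Ioi.mp ht)))).deriv]
      have := hdotpos t (Set.mem_Ici.mpr (le_of_lt (Set.mem_Ioi.mp ht)))
      nlinarith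
  have hGbd : ∀ t ∈ Set.Ici (0:ℝ), G t ≤ G 0 := fun t ht =>
    hanti Set.self_mem_Ici ht (Set.mem_Ici.mp ht)
  -- eigenvalue bounds
  obtain ⟨μ, hμ, hlow⟩ := quad_lower n P hP
  obtain ⟨Λ, hΛ, hupp⟩ := quad_upper n P
  have hsqle : ∀ t ∈ Set.Ici (0:ℝ), ∑ i, D t i ^ 2 ≤ G 0 / μ := by
    intro t ht
    have h1 := hlow (D t)
    have h2 := hGbd t ht
    rw [div_eq_mul_inv]
    calc ∑ i, D t i ^ 2 = μ⁻¹ * (μ * ∑ i, D t i ^ 2) := by field_simp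
      _ ≤ μ⁻¹ * G 0 := by
          apply mul_le_mul_of_nonneg_left _ (inv_nonneg.mpr hμ.le)
          exact h1.trans h2
      _ = G 0 * μ⁻¹ := by ring
  -- bound on coordinates
  set B := 1 + Real.sqrt (G 0 / μ) with hBdef
  have hB1 : (1:ℝ) ≤ B := le_add_of_nonneg_right (Real.sqrt_nonneg _)
  have hB0 : (0:ℝ) < B := lt_of_lt_of_le one_pos hB1
  have hXle : ∀ t ∈ Set.Ici (0:ℝ), ∀ i, X t i ≤ B := by
    intro t ht i
    have h1 : D t i ^ 2 ≤ G 0 / μ :=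
      (Finset.single_le_sum (fun j _ => sq_nonneg (D t j)) (Finset.mem_univ i)).trans
        (hsqle t ht)
    have h2 : |D t i| ≤ Real.sqrt (G 0 / μ) := by
      rw [← Real.sqrt_sq_eq_abs]
      exact Real.sqrt_le_sqrt h1
    have : D t i ≤ Real.sqrt (G 0 / μ) := (le_abs_self _).trans h2
    simp only [hDdef] at this
    simp only [hBdef]
    linarith
  -- the decay constant
  set κ := 2 / (Λ * B) with hκdef
  have hκ0 : 0 < κ := by positivity
  -- differential inequality: G' ≤ -κ G
  have hkey : ∀ t ∈ Set.Ici (0:ℝ), -2 * (D t ⬝ᵥ g t) + κ * G t ≤ 0 := by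
    intro t ht
    have h1 : G t ≤ Λ * ∑ i, D t i ^ 2 := hupp (D t)
    have h2 : (∑ i, D t i ^ 2) / B ≤ D t ⬝ᵥ g t := by
      refine le_trans ?_ (hdotlow t ht)
      rw [Finset.sum_div]
      refine Finset.sum_le_sum fun i _ => ?_
      have hx := hXpos t ht i
      have hxb := hXle t ht i
      have : D t i ^ 2 = (X t i - 1)^2 := by simp [hDdef]
      rw [this]
      gcongr
    have hsq0 : 0 ≤ ∑ i, D t i ^ 2 := Finset.sum_nonneg fun i _ => sq_nonneg _
    have h3 : κ * G t ≤ κ * (Λ * ∑ i, D t i ^ 2) := by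
      apply mul_le_mul_of_nonneg_left h1 hκ0.le
    have h4 : κ * (Λ * ∑ i, D t i ^ 2) = 2 * ((∑ i, D t i ^ 2) / B) := by
      simp only [hκdef]
      field_simp
    nlinarith
  -- H = G * exp(κ t) is antitone
  set H : ℝ → ℝ := fun t => G t * Real.exp (κ * t) with hHdef
  have hHderiv : ∀ t ∈ Set.Ici (0:ℝ), HasDerivAt H
      ((-2 * (D t ⬝ᵥ g t) + κ * G t) * Real.exp (κ * t)) t := by
    intro t ht
    have h1 : HasDerivAt (fun s => Real.exp (κ * s)) (κ * Real.exp (κ * t)) t := by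
      have h0 : HasDerivAt (fun s : ℝ => κ * s) κ t := by
        simpa using (hasDerivAt_id t).const_mul κ
      have h2 := (Real.hasDerivAt_exp (κ * t)).comp t h0
      simpa [Function.comp_def, mul_comm] using h2
    have := (hG t ht).fun_mul h1
    exact this.congr_deriv (by ring)
  have hHc : ContinuousOn H (Set.Ici 0) := fun t ht =>
    ((hHderiv t ht).continuousAt).continuousWithinAt
  have hHanti : AntitoneOn H (Set.Ici 0) := by
    apply antitoneOn_of_deriv_nonpos (convex_Ici 0) hHc
    · intro t ht
      rw [interior_Ici] at ht
      exact (hHderiv t (Set.mem_Ici.mpr (le_of_lt (Set.mem_Ioi.mp ht)))).differentiableAt.differentiableWithinAt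
    · intro t ht
      rw [interior_Ici] at ht
      rw [(hHderiv t (Set.mem_Ici.mpr (le_of_lt (Set.mem_Ioi.mp ht)))).deriv]
      have := hkey t (Set.mem_Ici.mpr (le_of_lt (Set.mem_Ioi.mp ht)))
      have := Real.exp_pos (κ * t)
      nlinarith
  have hHbd : ∀ t ∈ Set.Ici (0:ℝ), H t ≤ G 0 := by
    intro t ht
    have := hHanti Set.self_mem_Ici ht (Set.mem_Ici.mp ht)
    simpa [hHdef] using this
  -- exponential decay of G
  have hGdecay : ∀ t ∈ Set.Ici (0:ℝ), G t ≤ G 0 * Real.exp (-(κ * t)) := by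
    intro t ht
    have h1 := hHbd t ht
    have h2 : (0:ℝ) < Real.exp (κ * t) := Real.exp_pos _
    rw [Real.exp_neg]
    rw [hHdef] at h1
    calc G t = G t * Real.exp (κ * t) * (Real.exp (κ * t))⁻¹ := by field_simp
      _ ≤ G 0 * (Real.exp (κ * t))⁻¹ := by
          apply mul_le_mul_of_nonneg_right h1 (inv_nonneg.mpr h2.le)
  -- final squeeze
  rw [tendsto_pi_nhds]
  intro i
  have hbound : ∀ t ∈ Set.Ici (0:ℝ), |X t i - 1| ≤ Real.sqrt (G 0 / μ * Real.exp (-(κ * t))) := by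
    intro t ht
    have h1 : (X t i - 1)^2 ≤ G t / μ := by
      have ha := hlow (D t)
      have hb : D t i ^ 2 ≤ ∑ j, D t j ^ 2 :=
        Finset.single_le_sum (fun j _ => sq_nonneg (D t j)) (Finset.mem_univ i)
      have : D t i ^ 2 = (X t i - 1)^2 := by simp [hDdef]
      rw [← this]
      rw [le_div_iff₀ hμ]
      nlinarith
    have h2 : G t / μ ≤ G 0 / μ * Real.exp (-(κ * t)) := by
      have := hGdecay t ht
      rw [div_mul_eq_mul_div, div_le_div_iff_of_pos_right hμ]
      exact this
    rw [← Real.sqrt_sq_eq_abs]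
    exact Real.sqrt_le_sqrt (h1.trans h2)
  have hlim : Filter.Tendsto (fun t => Real.sqrt (G 0 / μ * Real.exp (-(κ * t))))
      Filter.atTop (nhds 0) := by
    have h1 : Filter.Tendsto (fun t : ℝ => -(κ * t)) Filter.atTop Filter.atBot := by
      apply Filter.tendsto_neg_atBot_iff.mpr
      exact Filter.Tendsto.const_mul_atTop hκ0 Filter.tendsto_id
    have h2 : Filter.Tendsto (fun t : ℝ => Real.exp (-(κ * t))) Filter.atTop (nhds 0) :=
      Real.tendsto_exp_atBot.comp h1
    have h3 : Filter.Tendsto (fun t : ℝ => G 0 / μ * Real.exp (-(κ * t))) Filter.atTop (nhds 0) := by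
      simpa using h2.const_mul (G 0 / μ)
    have h4 := (Real.continuous_sqrt.tendsto 0).comp h3
    simpa [Function.comp_def] using h4
  have habs : Filter.Tendsto (fun t => |X t i - 1|) Filter.atTop (nhds 0) := by
    apply squeeze_zero' ?_ ?_ hlim
    · filter_upwards with t using abs_nonneg _
    · filter_upwards [Filter.eventually_ge_atTop (0:ℝ)] with t ht using hbound t ht
  have hsub : Filter.Tendsto (fun t => X t i - 1) Filter.atTop (nhds 0) := by
    have hneg := habs.neg
    rw [neg_zero] at hneg
    exact tendsto_of_tendsto_of_tendsto_of_le_of_le hneg habs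
      (fun t => neg_abs_le _) (fun t => le_abs_self _)
  have := hsub.add (tendsto_const_nhds (x := (1:ℝ)))
  simpa using this
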